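/- arXiv:1411.0870 — 2 statements merged into one kernel-verified Lean document; each statement's English description precedes it below -/
import Mathlib

section
/- The function V(r) = r·coth(r) − log(sinh(r)) − log 2 has the following asymptotic behaviour: (i) V(r) + log(r) → 1 − log 2 as r → 0⁺ (logarithmic divergence at the origin, i.e. V(r)/(−log r) → 1); and (ii) e^{2r} V(r)/(2r) → 1 as r → ∞ (exponential decay at infinity, V(r) ~ 2r e^{−2r}). -/
open MeasureTheory Filter Set
open scoped ENNReal NNReal Topology

noncomputable section

/-- `IsP2 μ` : `μ` is a Borel probability measure on `ℝ` with finite second moment. -/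
def IsP2 (μ : Measure ℝ) : Prop :=
  IsProbabilityMeasure μ ∧ Integrable (fun x => x ^ 2) μ

/-- The space `P₂(ℝ)` of Borel probability measures on `ℝ` with finite second moment. -/
abbrev P2 : Type := {μ : Measure ℝ // IsP2 μ}

/-- `π` is a coupling of `μ` and `ν`. -/
def IsCoupling (π : Measure (ℝ × ℝ)) (μ ν : Measure ℝ) : Prop :=
  π.map Prod.fst = μ ∧ π.map Prod.snd = ν

/-- The Wasserstein-2 distance on `P₂(ℝ)`. -/
noncomputable def W2 (μ ν : P2) : ℝ :=
  Real.sqrt (ENNReal.toReal (sInf {c : ℝ≥0∞ | ∃ π : Measure (ℝ × ℝ),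
    IsCoupling π μ.1 ν.1 ∧ c = ∫⁻ p, ENNReal.ofReal ((p.1 - p.2) ^ 2) ∂π}))

/-- Narrow convergence of a sequence of measures: testing against bounded continuous
functions. -/
def NarrowTendsto (μs : ℕ → Measure ℝ) (μ : Measure ℝ) : Prop :=
  ∀ f : BoundedContinuousFunction ℝ ℝ,
    Tendsto (fun n => ∫ x, f x ∂(μs n)) atTop (𝓝 (∫ x, f x ∂μ))

/-- Upper Dini derivative (as an extended real number). -/
noncomputable def diniUpper (f : ℝ → ℝ) (t : ℝ) : EReal :=
  limsup (fun h : ℝ => (((f (t + h) - f t) / h : ℝ) : EReal)) (𝓝[>] (0 : ℝ))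

/-- Local absolute continuity of a curve in `(P₂(ℝ), W₂)` on `(0, ∞)`. -/
def LocACCurve (u : ℝ → P2) : Prop :=
  ∀ a b : ℝ, 0 < a → a ≤ b → ∃ m : ℝ → ℝ,
    IntegrableOn m (Icc a b) ∧
    ∀ s t : ℝ, a ≤ s → s ≤ t → t ≤ b → W2 (u s) (u t) ≤ ∫ r in Icc s t, m r

/-- The (effective) domain of a functional on `P₂(ℝ)` with values in `(-∞, ∞]`. -/
def EDom (φ : P2 → EReal) : Set P2 := {μ | φ μ ≠ ⊤}

/-- `u` is a solution of the evolution variational inequality (EVI) for the functional `φ`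
with initial datum `u₀`:  it is a locally absolutely continuous curve with
`(1/2) d/dt W₂²(u_t, ν) ≤ φ(ν) − φ(u_t)` for all `t > 0` and all `ν ∈ Dom φ`, and
`W₂(u_t, u₀) → 0` as `t ↓ 0`. -/
def IsEVISolution (φ : P2 → EReal) (u : ℝ → P2) (u₀ : P2) : Prop :=
  u 0 = u₀ ∧ LocACCurve u ∧
  (∀ t : ℝ, 0 < t → ∀ ν ∈ EDom φ,
    (((1 : ℝ)/2 : ℝ) : EReal) * diniUpper (fun s => (W2 (u s) ν) ^ 2) t ≤ φ ν - φ (u t)) ∧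
  Tendsto (fun t => W2 (u t) u₀) (𝓝[>] (0 : ℝ)) (𝓝 0)

/-- A functional is proper if it is not identically `+∞`. -/
def ProperFn (φ : P2 → EReal) : Prop := ∃ μ : P2, φ μ ≠ ⊤

/-- Bounded from below (in particular the value `-∞` is never attained). -/
def BddBelowFn (φ : P2 → EReal) : Prop := ∃ C : ℝ, ∀ μ : P2, (C : EReal) ≤ φ μ

/-- (Sequential) lower semicontinuity with respect to the Wasserstein-2 distance. -/
def W2LSC (φ : P2 → EReal) : Prop :=
  ∀ (μs : ℕ → P2) (μ : P2), Tendsto (fun n => W2 (μs n) μ) atTop (𝓝 0) →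
    φ μ ≤ liminf (fun n => φ (μs n)) atTop

/-- (Sequential) lower semicontinuity with respect to narrow convergence. -/
def NarrowLSC (φ : P2 → EReal) : Prop :=
  ∀ (μs : ℕ → P2) (μ : P2), NarrowTendsto (fun n => (μs n).1) μ.1 →
    φ μ ≤ liminf (fun n => φ (μs n)) atTop

/-- Geodesic convexity: convexity along every constant-speed `W₂`-geodesic. -/
def GeodConvex (φ : P2 → EReal) : Prop :=
  ∀ γ : ℝ → P2,
    (∀ s t : ℝ, s ∈ Icc (0:ℝ) 1 → t ∈ Icc (0:ℝ) 1 →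
        W2 (γ s) (γ t) = |s - t| * W2 (γ 0) (γ 1)) →
    ∀ t : ℝ, t ∈ Icc (0:ℝ) 1 →
      φ (γ t) ≤ (((1 - t : ℝ)) : EReal) * φ (γ 0) + ((t : ℝ) : EReal) * φ (γ 1)

/-- Membership in the `W₂`-closure of a set of measures. -/
def InW2Closure (S : Set P2) (μ : P2) : Prop :=
  ∃ νs : ℕ → P2, (∀ k, νs k ∈ S) ∧ Tendsto (fun k => W2 (νs k) μ) atTop (𝓝 0)

/-- The interaction potential `V(r) = r coth r − log(sinh r) − log 2`. -/
noncomputable def V (r : ℝ) : ℝ :=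
  r * (Real.cosh r / Real.sinh r) - Real.log |Real.sinh r| - Real.log 2

-- sinh r / r → 1 as r → 0 (within ≠ 0)
lemma sinh_div_self_tendsto : Tendsto (fun r : ℝ => Real.sinh r / r) (𝓝[>] 0) (𝓝 1) := by
  have h := (Real.hasDerivAt_sinh 0)
  rw [hasDerivAt_iff_tendsto_slope] at h
  have h2 : Tendsto (slope Real.sinh 0) (𝓝[>] (0:ℝ)) (𝓝 (Real.cosh 0)) :=
    h.mono_left (nhdsWithin_mono _ (fun x hx => ne_of_gt hx))
  simp only [Real.cosh_zero] at h2
  refine h2.congr (fun r => ?_)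
  simp [slope_def_field, div_eq_div_iff]

lemma part1 : Tendsto (fun r : ℝ => V r + Real.log r) (𝓝[>] (0 : ℝ)) (𝓝 (1 - Real.log 2)) := by
  have h1 := sinh_div_self_tendsto
  have hcosh : Tendsto Real.cosh (𝓝[>] (0:ℝ)) (𝓝 1) := by
    simpa using (Real.continuous_cosh.tendsto 0).mono_left nhdsWithin_le_nhds
  have hlog : Tendsto (fun r : ℝ => Real.log (Real.sinh r / r)) (𝓝[>] (0:ℝ)) (𝓝 0) := by
    have := (Real.continuousAt_log one_ne_zero).tendsto.comp h1
    simpa [Function.comp_def] using this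
  have hmain : Tendsto (fun r : ℝ =>
      Real.cosh r * (Real.sinh r / r)⁻¹ - Real.log (Real.sinh r / r) - Real.log 2)
      (𝓝[>] (0:ℝ)) (𝓝 (1 - Real.log 2)) := by
    have := ((hcosh.mul (h1.inv₀ one_ne_zero)).sub hlog).sub (tendsto_const_nhds (x := Real.log 2))
    simpa using this
  refine hmain.congr' ?_
  filter_upwards [self_mem_nhdsWithin] with r (hr : 0 < r)
  have hs : 0 < Real.sinh r := by positivity
  have : Real.log (Real.sinh r / r) = Real.log (Real.sinh r) - Real.log r :=
    Real.log_div hs.ne' hr.ne'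
  rw [this]
  unfold V
  rw [abs_of_pos hs]
  field_simp
  ring

lemma part2 : Tendsto (fun r : ℝ => V r / (-Real.log r)) (𝓝[>] (0 : ℝ)) (𝓝 1) := by
  have hlog : Tendsto (fun r : ℝ => -Real.log r) (𝓝[>] (0:ℝ)) atTop :=
    tendsto_neg_atBot_atTop.comp Real.tendsto_log_nhdsGT_zero
  have h0 : Tendsto (fun r : ℝ => (V r + Real.log r) / (-Real.log r)) (𝓝[>] (0:ℝ)) (𝓝 0) :=
    part1.div_atTop hlog
  have hadd : Tendsto (fun r : ℝ => (V r + Real.log r) / (-Real.log r) + 1) (𝓝[>] (0:ℝ)) (𝓝 1) := by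
    simpa using h0.add (tendsto_const_nhds (x := (1:ℝ)))
  refine hadd.congr' ?_
  filter_upwards [hlog.eventually_gt_atTop 0] with r hr
  have hne : Real.log r ≠ 0 := by intro h; rw [h] at hr; simp at hr
  field_simp
  ring

lemma exp_neg_two_lt_one {r : ℝ} (hr : 0 < r) : Real.exp (-(2*r)) < 1 :=
  Real.exp_lt_one_iff.mpr (by linarith)

lemma Vform {r : ℝ} (hr : 0 < r) :
    V r = 2*r*Real.exp (-(2*r))/(1 - Real.exp (-(2*r))) - Real.log (1 - Real.exp (-(2*r))) := by
  set x := Real.exp (-(2*r)) with hxdef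
  have hx0 : 0 < x := Real.exp_pos _
  have hx1 : x < 1 := exp_neg_two_lt_one hr
  have h1x : (0:ℝ) < 1 - x := by linarith
  have ha : 0 < Real.exp r := Real.exp_pos r
  have h1 : Real.exp r * Real.exp (-r) = 1 := by rw [← Real.exp_add]; simp
  have h2 : x = Real.exp (-r) * Real.exp (-r) := by
    rw [hxdef, ← Real.exp_add]; ring_nf
  have hs : 0 < Real.sinh r := by positivity
  have hsinh : Real.sinh r = Real.exp r * (1 - x) / 2 := by
    rw [Real.sinh_eq, h2]
    linear_combination (Real.exp (-r)/2) * h1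
  have hcosh : Real.cosh r / Real.sinh r = (1 + x) / (1 - x) := by
    rw [div_eq_div_iff hs.ne' h1x.ne', Real.cosh_eq, Real.sinh_eq, h2]
    linear_combination (-Real.exp (-r)) * h1
  have hlog : Real.log (Real.sinh r) = r + Real.log (1 - x) - Real.log 2 := by
    rw [hsinh, Real.log_div (by positivity) (by norm_num),
      Real.log_mul ha.ne' h1x.ne', Real.log_exp]
  unfold V
  rw [abs_of_pos hs, hcosh, hlog]
  field_simp
  ring

lemma part3 : Tendsto (fun r : ℝ => Real.exp (2 * r) * V r / (2 * r)) atTop (𝓝 1) := by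
  have hx0 : Tendsto (fun r : ℝ => Real.exp (-(2*r))) atTop (𝓝 0) := by
    apply Real.tendsto_exp_atBot.comp
    apply tendsto_neg_atTop_atBot.comp
    exact tendsto_id.const_mul_atTop two_pos
  -- log(1-x)/x → -1
  have hslope : Tendsto (slope Real.log 1) (𝓝[≠] (1:ℝ)) (𝓝 1) := by
    have h := (Real.hasDerivAt_log one_ne_zero)
    rw [hasDerivAt_iff_tendsto_slope] at h
    simpa using h
  have hcomp : Tendsto (fun r : ℝ => 1 - Real.exp (-(2*r))) atTop (𝓝[≠] (1:ℝ)) := by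
    rw [tendsto_nhdsWithin_iff]
    constructor
    · simpa using (tendsto_const_nhds (x := (1:ℝ))).sub hx0
    · filter_upwards with r
      have := Real.exp_pos (-(2*r))
      simp only [mem_compl_iff, mem_singleton_iff]
      intro h
      nlinarith [Real.exp_pos (-(2*r))]
  have hlogx : Tendsto (fun r : ℝ =>
      Real.log (1 - Real.exp (-(2*r))) / Real.exp (-(2*r))) atTop (𝓝 (-1)) := by
    have h := (hslope.comp hcomp).neg
    have h2 : Tendsto (fun r : ℝ => -(slope Real.log 1 (1 - Real.exp (-(2*r)))))
        atTop (𝓝 (-1)) := by simpa using h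
    refine h2.congr (fun r => ?_)
    have hx : Real.exp (-(2*r)) ≠ 0 := (Real.exp_pos _).ne'
    simp only [Function.comp_apply, slope_def_field]
    rw [Real.log_one]
    field_simp
    ring
  have hdiv : Tendsto (fun r : ℝ =>
      (Real.log (1 - Real.exp (-(2*r))) / Real.exp (-(2*r))) / (2*r)) atTop (𝓝 0) :=
    hlogx.div_atTop (tendsto_id.const_mul_atTop two_pos)
  have hinv : Tendsto (fun r : ℝ => (1 - Real.exp (-(2*r)))⁻¹) atTop (𝓝 1) := by
    have := ((tendsto_const_nhds (x := (1:ℝ))).sub hx0).inv₀ (by norm_num)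
    simpa using this
  have hmain : Tendsto (fun r : ℝ => (1 - Real.exp (-(2*r)))⁻¹ -
      (Real.log (1 - Real.exp (-(2*r))) / Real.exp (-(2*r))) / (2*r)) atTop (𝓝 1) := by
    simpa using hinv.sub hdiv
  refine hmain.congr' ?_
  filter_upwards [eventually_gt_atTop (0:ℝ)] with r hr
  rw [Vform hr]
  have hx0' : (0:ℝ) < Real.exp (-(2*r)) := Real.exp_pos _
  have hx1 : Real.exp (-(2*r)) < 1 := exp_neg_two_lt_one hr
  have hE : Real.exp (2*r) = (Real.exp (-(2*r)))⁻¹ := by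
    rw [← Real.exp_neg]; ring_nf
  have h1x : 1 - Real.exp (-(2*r)) ≠ 0 := by linarith
  rw [hE]
  field_simp

/-- **Asymptotics of `V`.**  At the origin `V` diverges logarithmically:
`V(r) + log r → 1 − log 2` (hence `V(r)/(−log r) → 1`) as `r ↓ 0`; at infinity `V`
decays exponentially: `e^{2r} V(r)/(2r) → 1` (i.e. `V(r) ~ 2r e^{−2r}`). -/
theorem V_asymptotics :
    Tendsto (fun r : ℝ => V r + Real.log r) (𝓝[>] (0 : ℝ)) (𝓝 (1 - Real.log 2)) ∧
    Tendsto (fun r : ℝ => V r / (-Real.log r)) (𝓝[>] (0 : ℝ)) (𝓝 1) ∧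
    Tendsto (fun r : ℝ => Real.exp (2 * r) * V r / (2 * r)) atTop (𝓝 1) :=
  ⟨part1, part2, part3⟩

end
end

section
/- The function V(r) = r·coth(r) − log(sinh(r)) − log 2 is integrable on (0, ∞); that is, the constant a := ∫_0^∞ V(r) dr is finite. -/
open MeasureTheory Filter Set
open scoped ENNReal NNReal Topology

noncomputable section

lemma neg_log_le_rpow {r : ℝ} (hr : 0 < r) : -Real.log r ≤ 2 * r ^ (-(1/2) : ℝ) := by
  have hs : 0 < Real.sqrt r := Real.sqrt_pos.2 hr
  have h1 : -Real.log (Real.sqrt r) ≤ (Real.sqrt r)⁻¹ := by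
    have h := Real.log_le_sub_one_of_pos (inv_pos.2 hs)
    rw [Real.log_inv] at h
    linarith
  have h2 : Real.log r = 2 * Real.log (Real.sqrt r) := by
    rw [Real.log_sqrt hr.le]; ring
  have h3 : r ^ (-(1/2) : ℝ) = (Real.sqrt r)⁻¹ := by
    rw [Real.rpow_neg hr.le, Real.sqrt_eq_rpow]
  rw [h3, h2]; linarith

lemma V_eq {r : ℝ} (hr : 0 < r) :
    V r = r * Real.exp (-r) / Real.sinh r - Real.log (1 - Real.exp (-(2*r))) := by
  have hs : 0 < Real.sinh r := Real.sinh_pos_iff.2 hr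
  have hq : Real.exp (-(2*r)) < 1 := Real.exp_lt_one_iff.2 (by linarith)
  have key : Real.log (Real.sinh r) + Real.log 2 = r + Real.log (1 - Real.exp (-(2*r))) := by
    rw [← Real.log_mul hs.ne' two_ne_zero]
    have h2s : Real.sinh r * 2 = Real.exp r * (1 - Real.exp (-(2*r))) := by
      rw [Real.sinh_eq]; rw [mul_sub, ← Real.exp_add]; ring_nf
    rw [h2s, Real.log_mul (Real.exp_pos r).ne' (by linarith), Real.log_exp]
  unfold V
  rw [abs_of_pos hs]
  have hcs : Real.cosh r - Real.sinh r = Real.exp (-r) := Real.cosh_sub_sinh r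
  field_simp
  rw [mul_comm 2 r] at key
  linarith [congrArg (r * ·) hcs, congrArg (Real.sinh r * ·) key]

/-- **Integrability of `V` on `(0, ∞)`**: the constant `a := ∫_0^∞ V` is finite. -/
theorem V_integrableOn_Ioi : IntegrableOn V (Ioi (0 : ℝ)) volume := by
  have hcont : ContinuousOn V (Ioi 0) := by
    intro r hr
    have hs : Real.sinh r ≠ 0 := (Real.sinh_pos_iff.2 hr).ne'
    apply ContinuousAt.continuousWithinAt
    unfold V
    exact ((continuousAt_id.mul (Real.continuous_cosh.continuousAt.div
      Real.continuous_sinh.continuousAt hs)).sub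
      (Real.continuous_sinh.continuousAt.abs.log (abs_ne_zero.2 hs))).sub continuousAt_const
  have h01 : IntegrableOn V (Ioc (0:ℝ) 1) volume := by
    have hg : IntegrableOn (fun r : ℝ => (Real.cosh 1 + 1 + Real.log 2) + 2 * r ^ (-(1/2) : ℝ))
        (Ioc (0:ℝ) 1) volume := by
      apply (integrableOn_const measure_Ioc_lt_top.ne).add
      exact ((intervalIntegrable_iff_integrableOn_Ioc_of_le zero_le_one).mp
        (intervalIntegral.intervalIntegrable_rpow' (by norm_num))).const_mul 2
    apply Integrable.mono' hg
      ((hcont.mono Ioc_subset_Ioi_self).aestronglyMeasurable measurableSet_Ioc)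
    rw [ae_restrict_iff' measurableSet_Ioc]
    filter_upwards with r hr
    obtain ⟨hr0, hr1⟩ := hr
    have hs : 0 < Real.sinh r := Real.sinh_pos_iff.2 hr0
    have hrs : r < Real.sinh r := Real.self_lt_sinh_iff.2 hr0
    have hc1 : Real.cosh r ≤ Real.cosh 1 := by
      rw [Real.cosh_le_cosh]
      rw [abs_of_pos hr0, abs_of_pos one_pos]; exact hr1
    have hcpos : 0 < Real.cosh r := Real.cosh_pos r
    have ht1 : 0 < r * (Real.cosh r / Real.sinh r) := by positivity
    have ht1' : r * (Real.cosh r / Real.sinh r) ≤ Real.cosh 1 := by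
      rw [mul_div_assoc'] at *
      rw [div_le_iff₀ hs]
      nlinarith
    have hp : 0 < r ^ (-(1/2) : ℝ) := Real.rpow_pos_of_pos hr0 _
    have hlogup : Real.log (Real.sinh r) ≤ 1 := by
      calc Real.log (Real.sinh r) ≤ Real.log (Real.exp r) := by
            apply Real.log_le_log hs
            nlinarith [Real.exp_pos (-r), Real.sinh_eq r, Real.cosh_sub_sinh r, hcpos]
        _ = r := Real.log_exp r
        _ ≤ 1 := hr1
    have hloglo : -(2 * r ^ (-(1/2):ℝ)) ≤ Real.log (Real.sinh r) := by
      have := neg_log_le_rpow hr0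
      have := Real.log_le_log hr0 hrs.le
      linarith
    have hlog2 : 0 ≤ Real.log 2 := Real.log_nonneg (by norm_num)
    rw [Real.norm_eq_abs]
    unfold V
    rw [abs_of_pos hs]
    rw [abs_le]
    constructor <;> nlinarith [Real.cosh_pos 1]
  have h1i : IntegrableOn V (Ioi (1:ℝ)) volume := by
    have hg : IntegrableOn (fun r : ℝ => 4 * Real.exp (-(1/2) * r)) (Ioi (1:ℝ)) volume :=
      (exp_neg_integrableOn_Ioi 1 (by norm_num : (0:ℝ) < 1/2)).const_mul 4
    apply Integrable.mono' hg
      ((hcont.mono (Ioi_subset_Ioi zero_le_one)).aestronglyMeasurable measurableSet_Ioi)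
    rw [ae_restrict_iff' measurableSet_Ioi]
    filter_upwards with r hr
    rw [mem_Ioi] at hr
    have hr0 : (0:ℝ) < r := lt_trans one_pos hr
    have hs : 0 < Real.sinh r := Real.sinh_pos_iff.2 hr0
    have hs1 : 1 < Real.sinh r := by
      have h11 : (1:ℝ) < Real.sinh 1 := Real.self_lt_sinh_iff.2 one_pos
      have := Real.sinh_lt_sinh.2 hr
      linarith
    have hq : 0 < Real.exp (-(2*r)) := Real.exp_pos _
    have hqh : Real.exp (-(2*r)) ≤ 1/2 := by
      have h1 : Real.exp (-(2*r)) ≤ Real.exp (-2) := Real.exp_le_exp.2 (by linarith)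
      have h2 : (3:ℝ) ≤ Real.exp 2 := by
        have := Real.add_one_le_exp (2:ℝ); linarith
      have h3 : Real.exp (-2) = (Real.exp 2)⁻¹ := Real.exp_neg 2
      rw [h3] at h1
      have : (Real.exp 2)⁻¹ ≤ 1/3 := by
        rw [inv_le_comm₀ (by positivity) (by norm_num)] at *
        linarith
      linarith
    set q := Real.exp (-(2*r)) with hqdef
    have hA : 0 ≤ r * Real.exp (-r) / Real.sinh r := by positivity
    have hB : Real.log (1 - q) ≤ 0 := Real.log_nonpos (by linarith) (by linarith)
    have hAle : r * Real.exp (-r) / Real.sinh r ≤ 2 * Real.exp (-(1/2) * r) := by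
      have h1 : r * Real.exp (-r) / Real.sinh r ≤ r * Real.exp (-r) := by
        rw [div_le_iff₀ hs]
        nlinarith [mul_pos hr0 (Real.exp_pos (-r))]
      have h2 : r ≤ 2 * Real.exp (r/2) := by
        have := Real.add_one_le_exp (r/2); linarith
      have h3 : Real.exp (r/2) * Real.exp (-r) = Real.exp (-(1/2) * r) := by
        rw [← Real.exp_add]; ring_nf
      calc r * Real.exp (-r) / Real.sinh r ≤ r * Real.exp (-r) := h1
        _ ≤ 2 * Real.exp (r/2) * Real.exp (-r) := by
            nlinarith [Real.exp_pos (-r)]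
        _ = 2 * Real.exp (-(1/2) * r) := by rw [mul_assoc, h3]
    have hBle : -Real.log (1 - q) ≤ 2 * Real.exp (-(1/2) * r) := by
      have hne : (1:ℝ) - q ≠ 0 := by linarith
      have h := Real.log_le_sub_one_of_pos (inv_pos.2 (by linarith : (0:ℝ) < 1 - q))
      rw [Real.log_inv] at h
      have h2 : (1 - q)⁻¹ - 1 ≤ 2 * q := by
        nlinarith [mul_inv_cancel₀ hne, inv_pos.2 (show (0:ℝ) < 1 - q by linarith)]
      have h3 : q ≤ Real.exp (-(1/2) * r) := by
        rw [hqdef]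
        apply Real.exp_le_exp.2
        linarith
      linarith
    rw [Real.norm_eq_abs, V_eq hr0, ← hqdef, abs_le]
    constructor <;> nlinarith [Real.exp_pos (-(1/2) * r)]
  have : Ioi (0:ℝ) = Ioc 0 1 ∪ Ioi 1 := (Ioc_union_Ioi_eq_Ioi zero_le_one).symm
  rw [this]
  exact h01.union h1i

end
end
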